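/- With the labeling q_1,…,q_r, a_1,…,a_k of the arcs of the fixed proper circular arc representation of the minimum counterexample 𝒢: (1) if arc a_j is clockwise adjacent to arc q_i, then all of q_{i+1},…,q_r,a_1,…,a_j (at least r−i+j arcs) are clockwise adjacent to q_i; (2) if arc a_j is clockwise adjacent to arc a_i, then j > i and all of a_{i+1},…,a_j are clockwise adjacent to a_i; (3) if arc a_j is anticlockwise adjacent to arc a_i, then j < i and all of a_j,…,a_{i−1} are anticlockwise adjacent to a_i; (4) if arc a_j is anticlockwise adjacent to arc q_i, then all of a_j,…,a_k,q_1,…,q_{i−1} (at least k−j+i arcs) are anticlockwise adjacent to q_i. -/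

import Mathlib

open SimpleGraph
open scoped Classical

instance : Fact ((0:ℝ) < 1) := ⟨one_pos⟩

/-- An arc on the unit circle `AddCircle 1`, described by its left endpoint (the first
endpoint met anticlockwise from an interior point) and its (clockwise) length.
Since `0 < len < 1`, an arc is neither a single point nor the whole circle. -/
structure CArc where
  left : AddCircle (1:ℝ)
  len : ℝ
  len_pos : 0 < len
  len_lt_one : len < 1

namespace CArc

/-- The set of points of the arc: going clockwise from the left endpoint for `len`. -/
def pts (a : CArc) : Set (AddCircle (1:ℝ)) :=
  {q | ∃ t : ℝ, 0 ≤ t ∧ t ≤ a.len ∧ q = a.left + (t : AddCircle (1:ℝ))}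

/-- The right endpoint of an arc. -/
noncomputable def right (a : CArc) : AddCircle (1:ℝ) := a.left + ((a.len : ℝ) : AddCircle (1:ℝ))

end CArc

/-- A family of arcs on the circle: a finite set of arcs with all endpoints distinct. -/
structure ArcFamily where
  arcs : Finset CArc
  endpoints_distinct :
    ∀ a ∈ arcs, ∀ b ∈ arcs, a ≠ b →
      a.left ≠ b.left ∧ a.left ≠ b.right ∧ a.right ≠ b.left ∧ a.right ≠ b.right

namespace ArcFamily

/-- A family of arcs is proper if no arc is properly contained in another. -/
def IsProper (F : ArcFamily) : Prop :=
  ∀ a ∈ F.arcs, ∀ b ∈ F.arcs, ¬ a.pts ⊂ b.pts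

/-- The overlap set of a point `p`: all arcs of the family containing `p`. -/
noncomputable def overlap (F : ArcFamily) (p : AddCircle (1:ℝ)) : Finset CArc :=
  F.arcs.filter fun a => p ∈ a.pts

/-- `r_sup`: the maximum cardinality of an overlap set. -/
noncomputable def rsup (F : ArcFamily) : ℕ :=
  sSup {n | ∃ p, (F.overlap p).card = n}

/-- `r_inf`: the minimum cardinality of an overlap set. -/
noncomputable def rinf (F : ArcFamily) : ℕ :=
  sInf {n | ∃ p, (F.overlap p).card = n}

/-- The circular arc graph of a family: vertices are the arcs, two distinct arcs are
adjacent iff they intersect. -/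
def graph (F : ArcFamily) : SimpleGraph {a : CArc // a ∈ F.arcs} where
  Adj u v := u ≠ v ∧ (u.1.pts ∩ v.1.pts).Nonempty
  symm := by constructor; rintro u v ⟨h, q, h1, h2⟩; exact ⟨h.symm, q, h2, h1⟩
  loopless := by constructor; rintro u ⟨h, -⟩; exact h rfl

/-- `F.CwAdj u v` : the arc `v` is clockwise adjacent to the arc `u`,
i.e. `v ≠ u` and `v ∈ O(r(u))`. -/
def CwAdj (F : ArcFamily) (u v : CArc) : Prop :=
  v ≠ u ∧ v ∈ F.overlap u.right

/-- `F.AcwAdj u v` : the arc `v` is anticlockwise adjacent to the arc `u`,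
i.e. `v ≠ u` and `v ∈ O(l(u))`. -/
def AcwAdj (F : ArcFamily) (u v : CArc) : Prop :=
  v ≠ u ∧ v ∈ F.overlap u.left

end ArcFamily

/-- `G` has a complete minor on `m` vertices: there are `m` pairwise disjoint connected
branch sets with an edge of `G` between any two of them. -/
def HasKMinor {V : Type*} (G : SimpleGraph V) (m : ℕ) : Prop :=
  ∃ B : Fin m → Set V,
    (∀ i, (G.induce (B i)).Connected) ∧
    (Pairwise fun i j => Disjoint (B i) (B j)) ∧
    (Pairwise fun i j => ∃ u ∈ B i, ∃ v ∈ B j, G.Adj u v)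

/-- A graph is a proper circular arc graph if it is isomorphic to the circular arc graph
of some proper family of arcs. -/
def IsProperCircularArcGraph {V : Type*} (G : SimpleGraph V) : Prop :=
  ∃ F : ArcFamily, F.IsProper ∧ Nonempty (G ≃g F.graph)

/-- The clockwise angular distance from `p` to `q`: the unique `t ∈ [0,1)`
with `q = p + t`.  Points are "encountered" in clockwise order of this quantity
when traversing clockwise from `p`. -/
noncomputable def angFrom (p q : AddCircle (1:ℝ)) : ℝ :=
  ((AddCircle.equivIco (1:ℝ) 0) (q - p) : ℝ)

/-! ### Auxiliary geometric lemmas about `angFrom` and arcs -/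

lemma angFrom_mem (p q : AddCircle (1:ℝ)) : angFrom p q ∈ Set.Ico (0:ℝ) 1 := by
  have := ((AddCircle.equivIco (1:ℝ) 0) (q - p)).2
  simpa [angFrom] using this

lemma coe_angFrom (p q : AddCircle (1:ℝ)) : ((angFrom p q : ℝ) : AddCircle (1:ℝ)) = q - p := by
  have := (AddCircle.equivIco (1:ℝ) 0).symm_apply_apply (q - p)
  rw [← this]; rfl

lemma angFrom_eq_of (p q : AddCircle (1:ℝ)) (c : ℝ) (hc : c ∈ Set.Ico (0:ℝ) 1)
    (h : q = p + (c : AddCircle (1:ℝ))) : angFrom p q = c := by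
  have h1 : ((angFrom p q : ℝ) : AddCircle (1:ℝ)) = (c : AddCircle (1:ℝ)) := by
    rw [coe_angFrom, h]; abel
  rw [AddCircle.coe_eq_coe_iff_of_mem_Ico (a := 0) (by simpa using angFrom_mem p q)
    (by simpa using hc)] at h1
  exact h1

lemma eq_add_angFrom (p z : AddCircle (1:ℝ)) :
    z = p + ((angFrom p z : ℝ) : AddCircle (1:ℝ)) := by
  rw [coe_angFrom]; abel

lemma angFrom_self (p : AddCircle (1:ℝ)) : angFrom p p = 0 :=
  angFrom_eq_of p p 0 ⟨le_refl _, one_pos⟩ (by simp)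

lemma angFrom_inj {p z z' : AddCircle (1:ℝ)} (h : angFrom p z = angFrom p z') : z = z' := by
  have h1 := coe_angFrom p z
  have h2 := coe_angFrom p z'
  rw [h, h2] at h1
  exact sub_left_injective h1.symm

lemma coe_one_circ : (((1:ℝ)) : AddCircle (1:ℝ)) = 0 := by
  simpa using (AddCircle.coe_period (p := (1:ℝ)))

lemma coe_add_circ (x y : ℝ) :
    ((x + y : ℝ) : AddCircle (1:ℝ)) = (x : AddCircle (1:ℝ)) + y := rfl

lemma coe_sub_one (x : ℝ) : ((x - 1 : ℝ) : AddCircle (1:ℝ)) = (x : AddCircle (1:ℝ)) := by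
  have h : ((x : ℝ) : AddCircle (1:ℝ))
      = ((x - 1 : ℝ) : AddCircle (1:ℝ)) + ((1:ℝ) : AddCircle (1:ℝ)) := by
    rw [← coe_add_circ]; norm_num
  rw [h, coe_one_circ, add_zero]

lemma CArc.left_mem (w : CArc) : w.left ∈ w.pts :=
  ⟨0, le_refl _, le_of_lt w.len_pos, by simp⟩

lemma CArc.right_mem (w : CArc) : w.right ∈ w.pts :=
  ⟨w.len, le_of_lt w.len_pos, le_refl _, rfl⟩

lemma arc_pt_eq (p : AddCircle (1:ℝ)) (w : CArc) (t : ℝ) :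
    w.left + ((t : ℝ) : AddCircle (1:ℝ))
      = p + ((angFrom p w.left + t : ℝ) : AddCircle (1:ℝ)) := by
  rw [coe_add_circ, ← add_assoc, ← eq_add_angFrom]

/-- Master membership criterion for an arc, in terms of angular positions from a
base point `p`. -/
lemma mem_pts_iff (p : AddCircle (1:ℝ)) (w : CArc) (z : AddCircle (1:ℝ)) :
    z ∈ w.pts ↔ (angFrom p w.left ≤ angFrom p z ∧ angFrom p z ≤ angFrom p w.left + w.len)
      ∨ angFrom p z ≤ angFrom p w.left + w.len - 1 := by
  obtain ⟨hL0, hL1⟩ := angFrom_mem p w.left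
  obtain ⟨hz0, hz1⟩ := angFrom_mem p z
  have hlen0 := w.len_pos
  have hlen1 := w.len_lt_one
  constructor
  · rintro ⟨t, ht0, ht1, rfl⟩
    have hzeq := arc_pt_eq p w t
    by_cases hlt : angFrom p w.left + t < 1
    · left
      have := angFrom_eq_of p _ (angFrom p w.left + t) ⟨by linarith, hlt⟩ hzeq
      rw [this]
      exact ⟨by linarith, by linarith⟩
    · right
      push_neg at hlt
      have hzeq2 : w.left + ((t:ℝ) : AddCircle (1:ℝ))
          = p + ((angFrom p w.left + t - 1 : ℝ) : AddCircle (1:ℝ)) := by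
        rw [coe_sub_one]; exact hzeq
      have := angFrom_eq_of p _ (angFrom p w.left + t - 1) ⟨by linarith, by linarith⟩ hzeq2
      rw [this]; linarith
  · intro h
    rcases h with ⟨h1, h2⟩ | h3
    · refine ⟨angFrom p z - angFrom p w.left, by linarith, by linarith, ?_⟩
      rw [arc_pt_eq p w]
      have : (angFrom p w.left + (angFrom p z - angFrom p w.left) : ℝ) = angFrom p z := by ring
      rw [this]
      exact eq_add_angFrom p z
    · refine ⟨angFrom p z - angFrom p w.left + 1, by linarith, by linarith, ?_⟩
      rw [arc_pt_eq p w]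
      have he : (angFrom p w.left + (angFrom p z - angFrom p w.left + 1) : ℝ)
          = (angFrom p z + 1) := by ring
      rw [he]
      have h4 : ((angFrom p z + 1 : ℝ) : AddCircle (1:ℝ))
          = ((angFrom p z : ℝ) : AddCircle (1:ℝ)) := by
        rw [← coe_sub_one (angFrom p z + 1)]; norm_num
      rw [h4]
      exact eq_add_angFrom p z

lemma angFrom_right_of_lt (p : AddCircle (1:ℝ)) (w : CArc)
    (h : angFrom p w.left + w.len < 1) :
    angFrom p w.right = angFrom p w.left + w.len := by
  have hL0 := (angFrom_mem p w.left).1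
  exact angFrom_eq_of p _ _ ⟨by linarith [w.len_pos], h⟩ (arc_pt_eq p w w.len)

lemma angFrom_right_of_ge (p : AddCircle (1:ℝ)) (w : CArc)
    (h : 1 ≤ angFrom p w.left + w.len) :
    angFrom p w.right = angFrom p w.left + w.len - 1 := by
  have hL1 := (angFrom_mem p w.left).2
  have := w.len_lt_one
  refine angFrom_eq_of p _ _ ⟨by linarith, by linarith⟩ ?_
  rw [coe_sub_one]
  exact arc_pt_eq p w w.len

lemma mem_overlap_iff (F : ArcFamily) (p : AddCircle (1:ℝ)) (v : CArc) :
    v ∈ F.overlap p ↔ v ∈ F.arcs ∧ p ∈ v.pts := by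
  rw [ArcFamily.overlap]
  exact Finset.mem_filter

/-- A minimum counterexample to Hadwiger's conjecture among proper circular arc graphs:
a proper family of arcs whose circular arc graph `𝒢` has no complete minor on `χ(𝒢)`
vertices, while every proper circular arc graph on fewer vertices than `𝒢` has a
complete minor on its own chromatic number of vertices. -/
structure MinCounterexample where
  F : ArcFamily
  proper : F.IsProper
  no_clique_minor : ∀ m : ℕ, F.graph.chromaticNumber = m → ¬ HasKMinor F.graph m
  minimal : ∀ (V : Type) [inst : Fintype V] (G : SimpleGraph V),
    IsProperCircularArcGraph G → Fintype.card V < F.arcs.card →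
    ∀ m : ℕ, G.chromaticNumber = m → HasKMinor G m

/-- A minimum counterexample `𝒢` to Hadwiger's conjecture among proper circular arc
graphs, together with a fixed maximum overlap set `O = O(p₀)` of cardinality `r`,
the quantities `x = χ(𝒢) − r` and `k = n − r`, and the labeling `q 1, …, q r`
(the arcs of `O`) and `a 1, …, a k` (the remaining arcs) of the arcs of the
representation in the clockwise order, starting from `p₀`, in which their right
endpoints are encountered. -/
structure LabeledMinCounterexample extends MinCounterexample where
  p₀ : AddCircle (1:ℝ)
  r : ℕ
  x : ℕ
  k : ℕ
  q : ℕ → CArc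
  a : ℕ → CArc
  hr : (F.overlap p₀).card = r
  hmax : r = F.rsup
  hx : F.graph.chromaticNumber = ((r + x : ℕ) : ℕ∞)
  hk : F.arcs.card = r + k
  q_mem : ∀ i, 1 ≤ i → i ≤ r → q i ∈ F.overlap p₀
  a_mem : ∀ j, 1 ≤ j → j ≤ k → a j ∈ F.arcs ∧ a j ∉ F.overlap p₀
  q_inj : ∀ i i', 1 ≤ i → i ≤ r → 1 ≤ i' → i' ≤ r → q i = q i' → i = i'
  a_inj : ∀ j j', 1 ≤ j → j ≤ k → 1 ≤ j' → j' ≤ k → a j = a j' → j = j'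
  q_order : ∀ i i', 1 ≤ i → i < i' → i' ≤ r →
    angFrom p₀ (q i).right < angFrom p₀ (q i').right
  a_order : ∀ j j', 1 ≤ j → j < j' → j' ≤ k →
    angFrom p₀ (a j).right < angFrom p₀ (a j').right
  qa_order : ∀ i j, 1 ≤ i → i ≤ r → 1 ≤ j → j ≤ k →
    angFrom p₀ (q i).right < angFrom p₀ (a j).right

namespace LabeledMinCounterexample

variable (C : LabeledMinCounterexample)

lemma q_arcs {i : ℕ} (h1 : 1 ≤ i) (h2 : i ≤ C.r) :
    C.q i ∈ C.F.arcs ∧ C.p₀ ∈ (C.q i).pts :=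
  (mem_overlap_iff _ _ _).mp (C.q_mem i h1 h2)

lemma a_arcs {j : ℕ} (h1 : 1 ≤ j) (h2 : j ≤ C.k) :
    C.a j ∈ C.F.arcs ∧ C.p₀ ∉ (C.a j).pts := by
  obtain ⟨ha, hn⟩ := C.a_mem j h1 h2
  exact ⟨ha, fun hmem => hn ((mem_overlap_iff _ _ _).mpr ⟨ha, hmem⟩)⟩

lemma a_ne_q {i j : ℕ} (hi1 : 1 ≤ i) (hi2 : i ≤ C.r) (hj1 : 1 ≤ j) (hj2 : j ≤ C.k) :
    C.a j ≠ C.q i := by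
  intro h
  refine (C.a_arcs hj1 hj2).2 ?_
  rw [h]
  exact (C.q_arcs hi1 hi2).2

/-- Structure of an `a`-arc (not containing `p₀`): it is a genuine interval
`[L, L + len] ⊆ (0,1)` in angular position from `p₀`. -/
lemma a_struct {j : ℕ} (h1 : 1 ≤ j) (h2 : j ≤ C.k) :
    0 < angFrom C.p₀ (C.a j).left ∧
    angFrom C.p₀ (C.a j).right = angFrom C.p₀ (C.a j).left + (C.a j).len ∧
    angFrom C.p₀ (C.a j).left + (C.a j).len < 1 ∧
    ∀ z, z ∈ (C.a j).pts ↔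
      (angFrom C.p₀ (C.a j).left ≤ angFrom C.p₀ z ∧
        angFrom C.p₀ z ≤ angFrom C.p₀ (C.a j).right) := by
  have hnot := (C.a_arcs h1 h2).2
  have hmem := mem_pts_iff C.p₀ (C.a j) C.p₀
  rw [angFrom_self] at hmem
  obtain ⟨hL0, hL1⟩ := angFrom_mem C.p₀ (C.a j).left
  have hlen0 := (C.a j).len_pos
  have key : ¬ ((angFrom C.p₀ (C.a j).left ≤ 0 ∧
      0 ≤ angFrom C.p₀ (C.a j).left + (C.a j).len) ∨
      0 ≤ angFrom C.p₀ (C.a j).left + (C.a j).len - 1) := fun h => hnot (hmem.mpr h)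
  push_neg at key
  obtain ⟨key1, key2⟩ := key
  have hLpos : 0 < angFrom C.p₀ (C.a j).left := by
    rcases lt_or_ge 0 (angFrom C.p₀ (C.a j).left) with h | h
    · exact h
    · exfalso; have := key1 h; linarith
  have hB : angFrom C.p₀ (C.a j).left + (C.a j).len < 1 := by linarith
  have hR := angFrom_right_of_lt C.p₀ (C.a j) hB
  refine ⟨hLpos, hR, hB, fun z => ?_⟩
  rw [mem_pts_iff C.p₀ (C.a j) z, hR]
  constructor
  · rintro (⟨u1, u2⟩ | u3)
    · exact ⟨u1, u2⟩
    · exfalso; have := (angFrom_mem C.p₀ z).1; linarith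
  · exact fun h => Or.inl h

/-- Structure of a `q`-arc (containing `p₀`): membership criterion in terms of the
right endpoint, plus the position of the left endpoint. -/
lemma q_struct {i : ℕ} (h1 : 1 ≤ i) (h2 : i ≤ C.r) :
    (∀ z, z ∈ (C.q i).pts ↔
      (angFrom C.p₀ z ≤ angFrom C.p₀ (C.q i).right ∨
        angFrom C.p₀ (C.q i).right + 1 - (C.q i).len ≤ angFrom C.p₀ z)) ∧
    (angFrom C.p₀ (C.q i).left = 0 ∨
      angFrom C.p₀ (C.q i).left
        = angFrom C.p₀ (C.q i).right + 1 - (C.q i).len) := by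
  have hp0 := (C.q_arcs h1 h2).2
  have hmem := mem_pts_iff C.p₀ (C.q i) C.p₀
  rw [angFrom_self] at hmem
  obtain ⟨hL0, hL1⟩ := angFrom_mem C.p₀ (C.q i).left
  have hlen0 := (C.q i).len_pos
  have hlen1 := (C.q i).len_lt_one
  rcases hmem.mp hp0 with ⟨u1, _⟩ | u3
  · -- degenerate case : left endpoint at position 0
    have hLz : angFrom C.p₀ (C.q i).left = 0 := le_antisymm u1 hL0
    have hB : angFrom C.p₀ (C.q i).left + (C.q i).len < 1 := by rw [hLz]; linarith
    have hR := angFrom_right_of_lt C.p₀ (C.q i) hB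
    rw [hLz] at hR
    rw [zero_add] at hR
    refine ⟨fun z => ?_, Or.inl hLz⟩
    rw [mem_pts_iff C.p₀ (C.q i) z, hLz, hR, zero_add]
    obtain ⟨hz0, hz1⟩ := angFrom_mem C.p₀ z
    constructor
    · rintro (⟨_, v2⟩ | v3)
      · exact Or.inl v2
      · exact Or.inl (by linarith)
    · rintro (h | h)
      · exact Or.inl ⟨hz0, h⟩
      · exfalso; linarith
  · -- wrapping case
    have hge : 1 ≤ angFrom C.p₀ (C.q i).left + (C.q i).len := by linarith
    have hR := angFrom_right_of_ge C.p₀ (C.q i) hge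
    have hLeq : angFrom C.p₀ (C.q i).left
        = angFrom C.p₀ (C.q i).right + 1 - (C.q i).len := by rw [hR]; ring
    refine ⟨fun z => ?_, Or.inr hLeq⟩
    rw [mem_pts_iff C.p₀ (C.q i) z, hR]
    obtain ⟨hz0, hz1⟩ := angFrom_mem C.p₀ z
    constructor
    · rintro (⟨v1, _⟩ | v3)
      · exact Or.inr (by linarith)
      · exact Or.inl (by linarith)
    · rintro (h | h)
      · exact Or.inr (by linarith)
      · exact Or.inl ⟨by linarith, by linarith⟩

/-- No `a`-arc is (weakly, with a strict side) nested inside another `a`-arc. -/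
lemma not_nested_a {i j : ℕ} (hi1 : 1 ≤ i) (hi2 : i ≤ C.k) (hj1 : 1 ≤ j) (hj2 : j ≤ C.k)
    (hL : angFrom C.p₀ (C.a j).left ≤ angFrom C.p₀ (C.a i).left)
    (hR : angFrom C.p₀ (C.a i).right ≤ angFrom C.p₀ (C.a j).right)
    (hst : angFrom C.p₀ (C.a j).left < angFrom C.p₀ (C.a i).left ∨
           angFrom C.p₀ (C.a i).right < angFrom C.p₀ (C.a j).right) : False := by
  obtain ⟨hiL, hiR, hiB, hiM⟩ := C.a_struct hi1 hi2
  obtain ⟨hjL, hjR, hjB, hjM⟩ := C.a_struct hj1 hj2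
  have hsub : (C.a i).pts ⊆ (C.a j).pts := by
    intro z hz
    obtain ⟨u1, u2⟩ := (hiM z).mp hz
    exact (hjM z).mpr ⟨le_trans hL u1, le_trans u2 hR⟩
  refine C.proper _ (C.a_arcs hi1 hi2).1 _ (C.a_arcs hj1 hj2).1 ?_
  rw [Set.ssubset_def]
  refine ⟨hsub, fun hsup => ?_⟩
  rcases hst with h | h
  · have := ((hiM _).mp (hsup (CArc.left_mem (C.a j)))).1
    linarith
  · have := ((hiM _).mp (hsup (CArc.right_mem (C.a j)))).2
    linarith

/-- No `a`-arc is contained in a `q`-arc: contradiction from the position bound. -/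
lemma not_a_sub_q {i j : ℕ} (hi1 : 1 ≤ i) (hi2 : i ≤ C.r) (hj1 : 1 ≤ j) (hj2 : j ≤ C.k)
    (h : angFrom C.p₀ (C.q i).right + 1 - (C.q i).len ≤ angFrom C.p₀ (C.a j).left) :
    False := by
  obtain ⟨hqM, _⟩ := C.q_struct hi1 hi2
  obtain ⟨hjL, hjR, hjB, hjM⟩ := C.a_struct hj1 hj2
  have hsub : (C.a j).pts ⊆ (C.q i).pts := by
    intro z hz
    obtain ⟨u1, _⟩ := (hjM z).mp hz
    exact (hqM z).mpr (Or.inr (le_trans h u1))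
  refine C.proper _ (C.a_arcs hj1 hj2).1 _ (C.q_arcs hi1 hi2).1 ?_
  rw [Set.ssubset_def]
  exact ⟨hsub, fun hsup => (C.a_arcs hj1 hj2).2 (hsup (C.q_arcs hi1 hi2).2)⟩

/-- The left endpoint of `q i` lies on every earlier `q`-arc `q i'` (`i' < i`). -/
lemma q_left_mem {i i' : ℕ} (hi'1 : 1 ≤ i') (hlt : i' < i) (hi2 : i ≤ C.r) :
    (C.q i).left ∈ (C.q i').pts := by
  have h1i : 1 ≤ i := le_trans hi'1 (le_of_lt hlt)
  have hi'r : i' ≤ C.r := le_of_lt (lt_of_lt_of_le hlt hi2)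
  by_contra hnot
  have hnot0 := hnot
  obtain ⟨hM', hD'⟩ := C.q_struct hi'1 hi'r
  obtain ⟨hM, hD⟩ := C.q_struct h1i hi2
  rw [hM' ((C.q i).left)] at hnot
  push_neg at hnot
  obtain ⟨hA, hB⟩ := hnot
  have hRlt : angFrom C.p₀ (C.q i').right < angFrom C.p₀ (C.q i).right :=
    C.q_order i' i hi'1 hlt hi2
  have hqL0 : 0 < angFrom C.p₀ (C.q i).left :=
    lt_of_le_of_lt (angFrom_mem _ _).1 hA
  have hDi : angFrom C.p₀ (C.q i).left
      = angFrom C.p₀ (C.q i).right + 1 - (C.q i).len := by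
    rcases hD with h0 | h0
    · exfalso; rw [h0] at hqL0; exact lt_irrefl _ hqL0
    · exact h0
  have hsub : (C.q i').pts ⊆ (C.q i).pts := by
    intro z hz
    rcases (hM' z).mp hz with h | h
    · exact (hM z).mpr (Or.inl (by linarith))
    · exact (hM z).mpr (Or.inr (by linarith))
  refine C.proper _ (C.q_arcs hi'1 hi'r).1 _ (C.q_arcs h1i hi2).1 ?_
  rw [Set.ssubset_def]
  exact ⟨hsub, fun hsup => hnot0 (hsup (CArc.left_mem (C.q i)))⟩

lemma a_eq_of_right {i j : ℕ} (hi1 : 1 ≤ i) (hi2 : i ≤ C.k) (hj1 : 1 ≤ j) (hj2 : j ≤ C.k)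
    (h : angFrom C.p₀ (C.a i).right = angFrom C.p₀ (C.a j).right) : i = j := by
  by_contra hne
  have hne' : C.a i ≠ C.a j := fun he => hne (C.a_inj i j hi1 hi2 hj1 hj2 he)
  exact (C.F.endpoints_distinct _ (C.a_arcs hi1 hi2).1 _ (C.a_arcs hj1 hj2).1 hne').2.2.2
    (angFrom_inj h)

lemma lt_of_aR_lt {i j : ℕ} (hi1 : 1 ≤ i) (hi2 : i ≤ C.k) (hj1 : 1 ≤ j) (hj2 : j ≤ C.k)
    (h : angFrom C.p₀ (C.a i).right < angFrom C.p₀ (C.a j).right) : i < j := by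
  rcases lt_trichotomy i j with hh | hh | hh
  · exact hh
  · exfalso; rw [hh] at h; exact lt_irrefl _ h
  · exfalso; have := C.a_order j i hj1 hh hi2; linarith

end LabeledMinCounterexample

/-- Adjacency consequences of the labeling of the minimum counterexample:
(1) if `a j` is clockwise adjacent to `q i` then all of `q (i+1), …, q r, a 1, …, a j`
are clockwise adjacent to `q i`; (2) if `a j` is clockwise adjacent to `a i` then `i < j`
and all of `a (i+1), …, a j` are clockwise adjacent to `a i`; (3) if `a j` is
anticlockwise adjacent to `a i` then `j < i` and all of `a j, …, a (i−1)` are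
anticlockwise adjacent to `a i`; (4) if `a j` is anticlockwise adjacent to `q i` then all
of `a j, …, a k, q 1, …, q (i−1)` are anticlockwise adjacent to `q i`. -/
theorem labeling_adjacency_ranges (C : LabeledMinCounterexample) :
    (∀ i j, 1 ≤ i → i ≤ C.r → 1 ≤ j → j ≤ C.k → C.F.CwAdj (C.q i) (C.a j) →
      (∀ i', i < i' → i' ≤ C.r → C.F.CwAdj (C.q i) (C.q i')) ∧
      (∀ j', 1 ≤ j' → j' ≤ j → C.F.CwAdj (C.q i) (C.a j'))) ∧
    (∀ i j, 1 ≤ i → i ≤ C.k → 1 ≤ j → j ≤ C.k → C.F.CwAdj (C.a i) (C.a j) →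
      i < j ∧ ∀ j', i < j' → j' ≤ j → C.F.CwAdj (C.a i) (C.a j')) ∧
    (∀ i j, 1 ≤ i → i ≤ C.k → 1 ≤ j → j ≤ C.k → C.F.AcwAdj (C.a i) (C.a j) →
      j < i ∧ ∀ j', j ≤ j' → j' < i → C.F.AcwAdj (C.a i) (C.a j')) ∧
    (∀ i j, 1 ≤ i → i ≤ C.r → 1 ≤ j → j ≤ C.k → C.F.AcwAdj (C.q i) (C.a j) →
      (∀ j', j ≤ j' → j' ≤ C.k → C.F.AcwAdj (C.q i) (C.a j')) ∧
      (∀ i', 1 ≤ i' → i' < i → C.F.AcwAdj (C.q i) (C.q i'))) := by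
  refine ⟨?_, ?_, ?_, ?_⟩
  · -- (1) clockwise adjacency to a `q`-arc
    intro i j hi1 hi2 hj1 hj2 hadj
    obtain ⟨hjL, hjR, hjB, hjM⟩ := C.a_struct hj1 hj2
    obtain ⟨hm1, hm2⟩ := (hjM (C.q i).right).mp ((mem_overlap_iff _ _ _).mp hadj.2).2
    constructor
    · intro i' hii' hi'2
      have h1i' : 1 ≤ i' := le_trans hi1 (le_of_lt hii')
      refine ⟨fun he => absurd (C.q_inj i' i h1i' hi'2 hi1 hi2 he) (by omega), ?_⟩
      rw [mem_overlap_iff]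
      refine ⟨(C.q_arcs h1i' hi'2).1, ?_⟩
      exact ((C.q_struct h1i' hi'2).1 _).mpr
        (Or.inl (le_of_lt (C.q_order i i' hi1 hii' hi'2)))
    · intro j' h1j' hj'le
      rcases eq_or_lt_of_le hj'le with he | hlt
      · subst he; exact hadj
      · have hj'k : j' ≤ C.k := le_trans hj'le hj2
        obtain ⟨hkL, hkR, hkB, hkM⟩ := C.a_struct h1j' hj'k
        have hqa : angFrom C.p₀ (C.q i).right < angFrom C.p₀ (C.a j').right :=
          C.qa_order i j' hi1 hi2 h1j' hj'k
        have hRR : angFrom C.p₀ (C.a j').right < angFrom C.p₀ (C.a j).right :=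
          C.a_order j' j h1j' hlt hj2
        have hLle : angFrom C.p₀ (C.a j').left ≤ angFrom C.p₀ (C.q i).right := by
          by_contra hcon
          push_neg at hcon
          exact C.not_nested_a h1j' hj'k hj1 hj2 (by linarith) (by linarith)
            (Or.inl (by linarith))
        refine ⟨C.a_ne_q hi1 hi2 h1j' hj'k, ?_⟩
        rw [mem_overlap_iff]
        exact ⟨(C.a_arcs h1j' hj'k).1, (hkM _).mpr ⟨hLle, le_of_lt hqa⟩⟩
  · -- (2) clockwise adjacency among `a`-arcs
    intro i j hi1 hi2 hj1 hj2 hadj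
    obtain ⟨hiL, hiR, hiB, hiM⟩ := C.a_struct hi1 hi2
    obtain ⟨hjL, hjR, hjB, hjM⟩ := C.a_struct hj1 hj2
    obtain ⟨hm1, hm2⟩ := (hjM (C.a i).right).mp ((mem_overlap_iff _ _ _).mp hadj.2).2
    have hij : i < j := C.lt_of_aR_lt hi1 hi2 hj1 hj2
      (lt_of_le_of_ne hm2 (fun h => hadj.1
        (congrArg C.a (C.a_eq_of_right hi1 hi2 hj1 hj2 h)).symm))
    refine ⟨hij, fun j' hij' hj'le => ?_⟩
    rcases eq_or_lt_of_le hj'le with he | hlt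
    · subst he; exact hadj
    · have h1j' : 1 ≤ j' := le_trans hi1 (le_of_lt hij')
      have hj'k : j' ≤ C.k := le_trans hj'le hj2
      obtain ⟨hkL, hkR, hkB, hkM⟩ := C.a_struct h1j' hj'k
      have hR1 : angFrom C.p₀ (C.a i).right < angFrom C.p₀ (C.a j').right :=
        C.a_order i j' hi1 hij' hj'k
      have hR2 : angFrom C.p₀ (C.a j').right < angFrom C.p₀ (C.a j).right :=
        C.a_order j' j h1j' hlt hj2
      have hLle : angFrom C.p₀ (C.a j').left ≤ angFrom C.p₀ (C.a i).right := by
        by_contra hcon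
        push_neg at hcon
        exact C.not_nested_a h1j' hj'k hj1 hj2 (by linarith) (by linarith)
          (Or.inl (by linarith))
      refine ⟨fun he => absurd (C.a_inj j' i h1j' hj'k hi1 hi2 he) (by omega), ?_⟩
      rw [mem_overlap_iff]
      exact ⟨(C.a_arcs h1j' hj'k).1, (hkM _).mpr ⟨hLle, le_of_lt hR1⟩⟩
  · -- (3) anticlockwise adjacency among `a`-arcs
    intro i j hi1 hi2 hj1 hj2 hadj
    obtain ⟨hiL, hiR, hiB, hiM⟩ := C.a_struct hi1 hi2
    obtain ⟨hjL, hjR, hjB, hjM⟩ := C.a_struct hj1 hj2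
    obtain ⟨hm1, hm2⟩ := (hjM (C.a i).left).mp ((mem_overlap_iff _ _ _).mp hadj.2).2
    have hji : j < i := by
      rcases lt_trichotomy j i with hh | hh | hh
      · exact hh
      · exfalso; exact hadj.1 (congrArg C.a hh)
      · exfalso
        have hRR : angFrom C.p₀ (C.a i).right < angFrom C.p₀ (C.a j).right :=
          C.a_order i j hi1 hh hj2
        exact C.not_nested_a hi1 hi2 hj1 hj2 hm1 (le_of_lt hRR) (Or.inr hRR)
    refine ⟨hji, fun j' hjle hj'lt => ?_⟩
    rcases eq_or_lt_of_le hjle with he | hlt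
    · subst he; exact hadj
    · have h1j' : 1 ≤ j' := le_trans hj1 (le_of_lt hlt)
      have hj'k : j' ≤ C.k := le_trans (le_of_lt hj'lt) hi2
      obtain ⟨hkL, hkR, hkB, hkM⟩ := C.a_struct h1j' hj'k
      have hR1 : angFrom C.p₀ (C.a j).right < angFrom C.p₀ (C.a j').right :=
        C.a_order j j' hj1 hlt hj'k
      have hR2 : angFrom C.p₀ (C.a j').right < angFrom C.p₀ (C.a i).right :=
        C.a_order j' i h1j' hj'lt hi2
      have hLle : angFrom C.p₀ (C.a j').left ≤ angFrom C.p₀ (C.a i).left := by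
        by_contra hcon
        push_neg at hcon
        exact C.not_nested_a h1j' hj'k hi1 hi2 (le_of_lt hcon) (le_of_lt hR2)
          (Or.inl hcon)
      refine ⟨fun he => absurd (C.a_inj j' i h1j' hj'k hi1 hi2 he) (by omega), ?_⟩
      rw [mem_overlap_iff]
      exact ⟨(C.a_arcs h1j' hj'k).1, (hkM _).mpr ⟨hLle, by linarith⟩⟩
  · -- (4) anticlockwise adjacency to a `q`-arc
    intro i j hi1 hi2 hj1 hj2 hadj
    obtain ⟨hjL, hjR, hjB, hjM⟩ := C.a_struct hj1 hj2
    obtain ⟨hm1, hm2⟩ := (hjM (C.q i).left).mp ((mem_overlap_iff _ _ _).mp hadj.2).2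
    obtain ⟨hMi, hDi⟩ := C.q_struct hi1 hi2
    have hqL0 : 0 < angFrom C.p₀ (C.q i).left := lt_of_lt_of_le hjL hm1
    have hDi' : angFrom C.p₀ (C.q i).left
        = angFrom C.p₀ (C.q i).right + 1 - (C.q i).len := by
      rcases hDi with h0 | h0
      · exfalso; rw [h0] at hqL0; exact lt_irrefl _ hqL0
      · exact h0
    constructor
    · intro j' hjle hj'k
      rcases eq_or_lt_of_le hjle with he | hlt
      · subst he; exact hadj
      · have h1j' : 1 ≤ j' := le_trans hj1 (le_of_lt hlt)
        obtain ⟨hkL, hkR, hkB, hkM⟩ := C.a_struct h1j' hj'k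
        have hR1 : angFrom C.p₀ (C.a j).right < angFrom C.p₀ (C.a j').right :=
          C.a_order j j' hj1 hlt hj'k
        have hLle : angFrom C.p₀ (C.a j').left ≤ angFrom C.p₀ (C.q i).left := by
          by_contra hcon
          push_neg at hcon
          exact C.not_a_sub_q hi1 hi2 h1j' hj'k (by linarith)
        refine ⟨C.a_ne_q hi1 hi2 h1j' hj'k, ?_⟩
        rw [mem_overlap_iff]
        exact ⟨(C.a_arcs h1j' hj'k).1, (hkM _).mpr ⟨hLle, by linarith⟩⟩
    · intro i' h1i' hi'lt
      have hi'r : i' ≤ C.r := le_of_lt (lt_of_lt_of_le hi'lt hi2)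
      refine ⟨fun he => absurd (C.q_inj i' i h1i' hi'r hi1 hi2 he) (by omega), ?_⟩
      rw [mem_overlap_iff]
      exact ⟨(C.q_arcs h1i' hi'r).1, C.q_left_mem h1i' hi'lt hi2⟩
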